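/- Value update rule: with the notation above, after adding seed s to seed set S, the new equilibrium values satisfy, for every interior node i ≠ s: v^{S∪{s}}(i) = v^S(i) + (1 - v^S(s))·F^S_{is}/F^S_{ss}. -/

import Mathlib

/-- `v` is the equilibrium (harmonic extension) for the Heat Conduction model
with transition matrix `P`, seed set `S` (boundary value 1) and bias node
`bias` (boundary value 0): it is fixed on the boundary and harmonic elsewhere. -/
def IsHCEquilibrium {n : ℕ} (P : Matrix (Fin n) (Fin n) ℝ) (bias : Fin n)
    (S : Finset (Fin n)) (v : Fin n → ℝ) : Prop :=
  v bias = 0 ∧ (∀ s ∈ S, v s = 1) ∧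
    ∀ i, i ≠ bias → i ∉ S → v i = ∑ j, P i j * v j

/-- From every non-bias node there is a path of positive transitions of `P`
reaching the bias node (absorbing-chain structure). -/
def ReachesBias {n : ℕ} (P : Matrix (Fin n) (Fin n) ℝ) (bias : Fin n) : Prop :=
  ∀ i : Fin n, i ≠ bias → ∃ k : ℕ, ∃ p : Fin (k + 1) → Fin n,
    p 0 = i ∧ (∀ j : Fin k, 0 < P (p j.castSucc) (p j.succ)) ∧
      p (Fin.last k) = bias

/-- Minimum principle: a superharmonic function vanishing on an absorbing
boundary set containing the bias is nonnegative. -/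
lemma hc_superharm_nonneg {n : ℕ} (P : Matrix (Fin n) (Fin n) ℝ)
    (hP0 : ∀ i j, 0 ≤ P i j) (hP1 : ∀ i, ∑ j, P i j = 1)
    (bias : Fin n) (hreach : ReachesBias P bias)
    (B : Finset (Fin n)) (hbB : bias ∈ B)
    (w : Fin n → ℝ) (hwB : ∀ i ∈ B, w i = 0)
    (hw : ∀ i, i ∉ B → ∑ j, P i j * w j ≤ w i) : ∀ i, 0 ≤ w i := by
  by_contra hcon
  push_neg at hcon
  obtain ⟨i0, hi0⟩ := hcon
  obtain ⟨a, -, ha⟩ := Finset.exists_min_image Finset.univ w ⟨i0, Finset.mem_univ i0⟩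
  set m := w a with hm
  have hmneg : m < 0 := lt_of_le_of_lt (ha i0 (Finset.mem_univ i0)) hi0
  have hmin : ∀ j, m ≤ w j := fun j => ha j (Finset.mem_univ j)
  -- propagation of the minimum
  have hprop : ∀ i, w i = m → ∀ j, 0 < P i j → w j = m := by
    intro i hi j hPij
    have hiB : i ∉ B := by
      intro hiB
      rw [hwB i hiB] at hi
      exact absurd hi.symm (ne_of_lt hmneg)
    have h1 : ∑ j, P i j * (w j - m) ≤ 0 := by
      have : ∑ j, P i j * (w j - m) = (∑ j, P i j * w j) - m := by
        simp [mul_sub, Finset.sum_sub_distrib, ← Finset.sum_mul, hP1 i]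
      rw [this]
      have := hw i hiB
      linarith [hi ▸ this]
    have h0 : ∀ k ∈ Finset.univ, (0:ℝ) ≤ P i k * (w k - m) := fun k _ =>
      mul_nonneg (hP0 i k) (by linarith [hmin k])
    have hz : ∀ k ∈ Finset.univ, P i k * (w k - m) = 0 := by
      rw [← Finset.sum_eq_zero_iff_of_nonneg h0]
      exact le_antisymm h1 (Finset.sum_nonneg h0)
    have := hz j (Finset.mem_univ j)
    rcases mul_eq_zero.mp this with h | h
    · exact absurd h (ne_of_gt hPij)
    · linarith
  have habias : a ≠ bias := by
    intro h
    rw [h, hwB bias hbB] at hm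
    exact absurd hm (ne_of_lt hmneg)
  obtain ⟨k, p, hp0, hpstep, hplast⟩ := hreach a habias
  have hrec : ∀ t : ℕ, ∀ h : t ≤ k, w (p ⟨t, Nat.lt_succ_of_le h⟩) = m := by
    intro t
    induction t with
    | zero => intro h; simp [show (⟨0, Nat.lt_succ_of_le h⟩ : Fin (k+1)) = 0 from rfl, hp0, hm]
    | succ t ih =>
      intro h
      have ht : t ≤ k := Nat.le_of_succ_le h
      have htk : t < k := h
      have hstep := hpstep ⟨t, htk⟩
      have hc : (⟨t, htk⟩ : Fin k).castSucc = ⟨t, Nat.lt_succ_of_le ht⟩ := rfl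
      have hsu : (⟨t, htk⟩ : Fin k).succ = ⟨t + 1, Nat.lt_succ_of_le h⟩ := rfl
      rw [hc, hsu] at hstep
      exact hprop _ (ih ht) _ hstep
  have := hrec k le_rfl
  rw [show (⟨k, Nat.lt_succ_of_le le_rfl⟩ : Fin (k+1)) = Fin.last k from rfl, hplast,
    hwB bias hbB] at this
  exact absurd this.symm (ne_of_lt hmneg)

/-- Uniqueness: a harmonic function vanishing on the boundary vanishes. -/
lemma hc_harm_zero {n : ℕ} (P : Matrix (Fin n) (Fin n) ℝ)
    (hP0 : ∀ i j, 0 ≤ P i j) (hP1 : ∀ i, ∑ j, P i j = 1)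
    (bias : Fin n) (hreach : ReachesBias P bias)
    (B : Finset (Fin n)) (hbB : bias ∈ B)
    (w : Fin n → ℝ) (hwB : ∀ i ∈ B, w i = 0)
    (hw : ∀ i, i ∉ B → w i = ∑ j, P i j * w j) : ∀ i, w i = 0 := by
  have h1 := hc_superharm_nonneg P hP0 hP1 bias hreach B hbB w hwB
    (fun i hi => le_of_eq (hw i hi).symm)
  have h2 := hc_superharm_nonneg P hP0 hP1 bias hreach B hbB (fun i => -w i)
    (fun i hi => by simp [hwB i hi])
    (fun i hi => by
      simp only [mul_neg, Finset.sum_neg_distrib]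
      have := hw i hi
      linarith)
  intro i
  have := h1 i
  have := h2 i
  linarith

/-- Value update rule. After adding seed `s` to seed set `S`,
for every interior node `i ≠ s`:
`v^{S∪{s}} i = v^S i + (1 - v^S s) · F^S_{is} / F^S_{ss}`. -/
theorem hc_value_update_rule (n : ℕ) (P : Matrix (Fin n) (Fin n) ℝ)
    (hP0 : ∀ i j, 0 ≤ P i j) (hP1 : ∀ i, ∑ j, P i j = 1)
    (bias : Fin n) (hreach : ReachesBias P bias)
    (S : Finset (Fin n)) (hbS : bias ∉ S)
    (s : Fin n) (hsS : s ∉ S) (hsb : s ≠ bias)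
    (hsmem : s ∉ insert bias S)
    (RS : Matrix {i : Fin n // i ∉ insert bias S}
      {i : Fin n // i ∉ insert bias S} ℝ)
    (hRS : RS = Matrix.of fun i j => P i.val j.val)
    (F : Matrix {i : Fin n // i ∉ insert bias S}
      {i : Fin n // i ∉ insert bias S} ℝ)
    (hF : F = (1 - RS)⁻¹)
    (vS vSs : Fin n → ℝ)
    (hvS : IsHCEquilibrium P bias S vS)
    (hvSs : IsHCEquilibrium P bias (insert s S) vSs) :
    ∀ i : Fin n, ∀ hi : i ∉ insert bias S, i ≠ s →
      vSs i = vS i +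
        (1 - vS s) * F ⟨i, hi⟩ ⟨s, hsmem⟩ / F ⟨s, hsmem⟩ ⟨s, hsmem⟩ := by
  have hs' : True := trivial
  -- converting sums over the subtype to full sums
  have hsum : ∀ (i : Fin n) (x : {i : Fin n // i ∉ insert bias S} → ℝ),
      (∑ j : {i : Fin n // i ∉ insert bias S}, P i j.val * x j) =
        ∑ j : Fin n, P i j * (if h : j ∉ insert bias S then x ⟨j, h⟩ else 0) := by
    intro i x
    calc (∑ j : {i : Fin n // i ∉ insert bias S}, P i j.val * x j)
        = ∑ j : {i : Fin n // i ∉ insert bias S},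
            P i j.val * (if h : j.val ∉ insert bias S then x ⟨j.val, h⟩ else 0) := by
          apply Finset.sum_congr rfl
          intro j _
          rw [dif_pos j.prop]
      _ = ∑ j ∈ (insert bias S)ᶜ,
            P i j * (if h : j ∉ insert bias S then x ⟨j, h⟩ else 0) :=
          (Finset.sum_subtype ((insert bias S)ᶜ) (fun j => Finset.mem_compl)
            (fun j => P i j * (if h : j ∉ insert bias S then x ⟨j, h⟩ else 0))).symm
      _ = ∑ j : Fin n, P i j * (if h : j ∉ insert bias S then x ⟨j, h⟩ else 0) := by
          apply Finset.sum_subset (Finset.subset_univ _)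
          intro j _ hj
          rw [Finset.mem_compl, not_not] at hj
          rw [dif_neg (not_not_intro hj), mul_zero]
  -- 1 - RS is invertible
  have hker : ∀ x : {i : Fin n // i ∉ insert bias S} → ℝ,
      Matrix.mulVec (1 - RS) x = 0 → x = 0 := by
    intro x hx
    have hfix : ∀ i : {i : Fin n // i ∉ insert bias S},
        x i = ∑ j : {i : Fin n // i ∉ insert bias S}, P i.val j.val * x j := by
      intro i
      have := congrFun hx i
      rw [Matrix.sub_mulVec, Matrix.one_mulVec, Pi.sub_apply, Pi.zero_apply, sub_eq_zero] at this
      rw [this, Matrix.mulVec, dotProduct]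
      simp [hRS]
    set w : Fin n → ℝ := fun i => if h : i ∉ insert bias S then x ⟨i, h⟩ else 0 with hw
    have hzero : ∀ i, w i = 0 := by
      apply hc_harm_zero P hP0 hP1 bias hreach (insert bias S) (Finset.mem_insert_self _ _)
      · intro i hi; exact dif_neg (not_not_intro hi)
      · intro i hi
        rw [← hsum i x]
        simp only [hw, dif_pos hi]
        exact hfix ⟨i, hi⟩
    funext j
    have h0 := hzero j.val
    rw [show w j.val = x ⟨j.val, j.prop⟩ from dif_pos j.prop] at h0
    simpa using h0
  have hinj : Function.Injective (1 - RS).mulVec := by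
    intro x y hxy
    have : Matrix.mulVec (1 - RS) (x - y) = 0 := by
      rw [Matrix.mulVec_sub, hxy, sub_self]
    exact sub_eq_zero.mp (hker _ this)
  have hunit : IsUnit (1 - RS) := Matrix.mulVec_injective_iff_isUnit.mp hinj
  have hFmul : F = RS * F + 1 := by
    have h1 : (1 - RS) * F = 1 := by
      rw [hF]
      exact Matrix.mul_nonsing_inv _ ((Matrix.isUnit_iff_isUnit_det _).mp hunit)
    rw [Matrix.sub_mul, Matrix.one_mul] at h1
    linear_combination (norm := module) h1
  -- column relation
  have hcol : ∀ i : {i : Fin n // i ∉ insert bias S},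
      F i ⟨s, hsmem⟩ = (∑ j : {i : Fin n // i ∉ insert bias S},
          P i.val j.val * F j ⟨s, hsmem⟩) +
        (if i = (⟨s, hsmem⟩ : {i : Fin n // i ∉ insert bias S}) then (1:ℝ) else 0) := by
    intro i
    have := congrFun (congrFun hFmul i) ⟨s, hsmem⟩
    rw [Matrix.add_apply, Matrix.mul_apply, Matrix.one_apply] at this
    rw [this]
    congr 1
    apply Finset.sum_congr rfl
    intro j _
    rw [hRS]; rfl
  -- the extended column G
  set G : Fin n → ℝ := fun i => if h : i ∉ insert bias S then F ⟨i, h⟩ ⟨s, hsmem⟩ else 0 with hG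
  have hGharm : ∀ i, ∀ _ : i ∉ insert bias S,
      G i = (∑ j, P i j * G j) + (if i = s then (1:ℝ) else 0) := by
    intro i h
    have hc := hcol ⟨i, h⟩
    rw [hsum i (fun j => F j ⟨s, hsmem⟩)] at hc
    simp only [hG, dif_pos h]
    rw [hc]
    congr 1
    simp [Subtype.ext_iff]
  have hGnn : ∀ i, 0 ≤ G i := by
    apply hc_superharm_nonneg P hP0 hP1 bias hreach (insert bias S)
      (Finset.mem_insert_self _ _)
    · intro i hi; exact dif_neg (not_not_intro hi)
    · intro i hi
      rw [hGharm i hi]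
      have : (0:ℝ) ≤ if i = s then (1:ℝ) else 0 := by positivity
      linarith
  have hFss : (1:ℝ) ≤ F ⟨s, hsmem⟩ ⟨s, hsmem⟩ := by
    have h1 := hGharm s hsmem
    simp only [if_pos rfl, if_true, hG, dif_pos hsmem] at h1
    have hnn : 0 ≤ ∑ j, P s j * G j :=
      Finset.sum_nonneg fun j _ => mul_nonneg (hP0 s j) (hGnn j)
    simp only [hG] at hnn
    linarith
  have hFne : F ⟨s, hsmem⟩ ⟨s, hsmem⟩ ≠ 0 := by linarith
  set c : ℝ := (1 - vS s) / F ⟨s, hsmem⟩ ⟨s, hsmem⟩ with hc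
  obtain ⟨hvb, hvS1, hvh⟩ := hvS
  obtain ⟨hwb, hwS1, hwh⟩ := hvSs
  -- the difference is harmonic with boundary insert bias (insert s S)
  set d : Fin n → ℝ := fun i => vSs i - (vS i + c * G i) with hd
  have hdzero : ∀ i, d i = 0 := by
    apply hc_harm_zero P hP0 hP1 bias hreach (insert bias (insert s S))
      (Finset.mem_insert_self _ _)
    · intro i hi
      rcases Finset.mem_insert.mp hi with h | h
      · subst h
        have hGb : G i = 0 := dif_neg (not_not_intro (Finset.mem_insert_self _ _))
        simp [hd, hwb, hvb, hGb]
      · rcases Finset.mem_insert.mp h with h | h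
        · subst h
          have h1 : vSs i = 1 := hwS1 i (Finset.mem_insert_self _ _)
          have h2 : G i = F ⟨i, hsmem⟩ ⟨i, hsmem⟩ := dif_pos hsmem
          simp only [hd, h1, h2, hc]
          field_simp
          ring
        · have h1 : vSs i = 1 := hwS1 i (Finset.mem_insert_of_mem h)
          have h2 : vS i = 1 := hvS1 i h
          have h3 : G i = 0 :=
            dif_neg (not_not_intro (Finset.mem_insert_of_mem h))
          simp [hd, h1, h2, h3]
    · intro i hi
      have hib : i ≠ bias := fun h => hi (h ▸ Finset.mem_insert_self _ _)
      have his : i ≠ s := fun h => hi (Finset.mem_insert_of_mem (h ▸ Finset.mem_insert_self _ _))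
      have hiS : i ∉ S := fun h => hi (Finset.mem_insert_of_mem (Finset.mem_insert_of_mem h))
      have hiT : i ∉ insert bias S := by
        simp [Finset.mem_insert, hib, hiS]
      have e1 : vSs i = ∑ j, P i j * vSs j := hwh i hib (by simp [Finset.mem_insert, his, hiS])
      have e2 : vS i = ∑ j, P i j * vS j := hvh i hib hiS
      have e3 : G i = ∑ j, P i j * G j := by
        rw [hGharm i hiT, if_neg his, add_zero]
      have key : ∀ j, P i j * d j = P i j * vSs j - (P i j * vS j + c * (P i j * G j)) := by
        intro j; simp only [hd]; ring
      calc d i = vSs i - (vS i + c * G i) := rfl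
        _ = (∑ j, P i j * vSs j) - ((∑ j, P i j * vS j) + c * ∑ j, P i j * G j) := by
            rw [← e1, ← e2, ← e3]
        _ = ∑ j, P i j * d j := by
            rw [Finset.mul_sum, ← Finset.sum_add_distrib, ← Finset.sum_sub_distrib]
            exact (Finset.sum_congr rfl fun j _ => (key j)).symm
  intro i hi his
  have hz := hdzero i
  have hGi : G i = F ⟨i, hi⟩ ⟨s, hsmem⟩ := dif_pos hi
  simp only [hd, hGi] at hz
  have : vSs i = vS i + c * F ⟨i, hi⟩ ⟨s, hsmem⟩ := by linarith
  rw [this, hc, div_mul_eq_mul_div]
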